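/- arXiv:math/0503051 — 4 statements merged into one kernel-verified Lean document; each statement's English description precedes it below -/
import Mathlib

section
/- Let R be the ring of integers in a nonarchimedean local field k with uniformizer ϖ, V a finite-dimensional k-vector space, L a lattice (finitely generated R-submodule spanning V) in V, and T : V → V a diagonalizable k-linear map with T(L) = ϖ^r L for some integer r. Let α₁,…,α_ℓ be the eigenvalues of T with eigenspaces V₁,…,V_ℓ, and suppose that for i ≠ j we have α_i ≢ α_j mod ϖ^{r+1}R. Then L = ⊕_{i=1}^ℓ (L ∩ V_i). -/
/-- Lattice decomposition (Lemma `lem:lattice-decomp`): if R is the ring of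
integers (a DVR) with uniformizer ϖ and fraction field k, L a lattice in a
finite-dimensional k-vector space V, and T a diagonalizable k-linear map with
T(L) = ϖ^r L, whose eigenvalues are pairwise incongruent mod ϖ^{r+1}R, then
L is the (direct) sum of its intersections with the eigenspaces of T. -/
theorem lattice_eigenspace_decomposition
    (R : Type*) [CommRing R] [IsDomain R] [IsDiscreteValuationRing R]
    (k : Type*) [Field k] [Algebra R k] [IsFractionRing R k]
    (ϖ : R) (hϖ : Irreducible ϖ)
    (V : Type*) [AddCommGroup V] [Module k V] [Module R V] [IsScalarTower R k V]
    [FiniteDimensional k V]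
    (L : Submodule R V) (hLfg : L.FG)
    (hLspan : Submodule.span k (L : Set V) = ⊤)
    (T : Module.End k V) (r : ℤ)
    (hTL : L.map ((T : V →ₗ[k] V).restrictScalars R)
      = L.map (((algebraMap R k ϖ ^ r) • (LinearMap.id : V →ₗ[k] V)).restrictScalars R))
    (ℓ : ℕ) (α : Fin ℓ → k) (hαinj : Function.Injective α)
    (hαev : ∀ i, T.HasEigenvalue (α i))
    (hdiag : (⨆ i, T.eigenspace (α i)) = ⊤)
    (hsep : ∀ i j, i ≠ j →
      ¬ ∃ c : R, α i - α j = algebraMap R k ϖ ^ (r + 1) * algebraMap R k c) :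
    L = ⨆ i, L ⊓ (T.eigenspace (α i)).restrictScalars R := by
  classical
  have inj : Function.Injective (algebraMap R k) := IsFractionRing.injective R k
  set π : k := algebraMap R k ϖ with hπdef
  have hπ0 : π ≠ 0 := by
    intro h
    exact hϖ.ne_zero (inj (by rw [← hπdef, h, map_zero]))
  set S : Module.End k V := π ^ (-r) • T with hSdef
  -- S maps L into L
  have hSL : ∀ x ∈ L, S x ∈ L := by
    intro x hx
    have h1 : T x ∈ L.map (((π ^ r) • (LinearMap.id : V →ₗ[k] V)).restrictScalars R) := by
      rw [← hTL]; exact ⟨x, hx, rfl⟩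
    obtain ⟨y, hy, hyx⟩ := h1
    have hyx' : (π ^ r) • y = T x := by
      simpa using hyx
    have : S x = y := by
      rw [hSdef, LinearMap.smul_apply, ← hyx', smul_smul, zpow_neg,
        inv_mul_cancel₀ (zpow_ne_zero _ hπ0), one_smul]
    rw [this]; exact hy
  set β : Fin ℓ → k := fun i => π ^ (-r) * α i with hβdef
  have hSeig : ∀ i x, x ∈ T.eigenspace (α i) → S x = β i • x := by
    intro i x hx
    have hx' : T x = α i • x := Module.End.mem_eigenspace_iff.mp hx
    rw [hSdef, LinearMap.smul_apply, hx', smul_smul, hβdef]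
  -- there is a nonzero element of L in each eigenspace
  have hnz : ∀ i, ∃ x, x ∈ L ⊓ (T.eigenspace (α i)).restrictScalars R ∧ x ≠ 0 := by
    intro i
    obtain ⟨w, hw⟩ := (hαev i).exists_hasEigenvector
    have hw' : w ∈ Submodule.span k (L : Set V) := by rw [hLspan]; exact Submodule.mem_top
    obtain ⟨c, hcsupp, hcsum⟩ := Submodule.mem_span_set.mp hw'
    obtain ⟨d, hd⟩ := IsLocalization.exist_integer_multiples (nonZeroDivisors R)
      c.support (fun v => c v)
    refine ⟨(d : R) • w, ⟨?_, ?_⟩, ?_⟩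
    · -- d • w ∈ L
      rw [← hcsum, Finsupp.sum, Finset.smul_sum]
      apply Submodule.sum_mem
      intro v hv
      obtain ⟨e, he⟩ := hd v hv
      have : (d : R) • (c v • v) = e • v := by
        rw [← smul_assoc, ← he, algebraMap_smul]
      rw [this]
      exact L.smul_mem _ (hcsupp hv)
    · -- d • w ∈ eigenspace
      show (d : R) • w ∈ T.eigenspace (α i)
      rw [← algebraMap_smul k (d : R) w]
      exact Submodule.smul_mem _ _ hw.1
    · -- nonzero
      rw [← algebraMap_smul k (d : R) w]
      have hd0 : (algebraMap R k (d : R)) ≠ 0 := by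
        intro h
        exact nonZeroDivisors.coe_ne_zero d (inj (by rw [h, map_zero]))
      exact smul_ne_zero hd0 hw.2
  -- each β i is integral, hence in R
  have hβR : ∀ i, ∃ b : R, algebraMap R k b = β i := by
    intro i
    obtain ⟨x, hx, hx0⟩ := hnz i
    set N := L ⊓ (T.eigenspace (α i)).restrictScalars R with hNdef
    have hN0 : N ≠ ⊥ := by
      intro h
      exact hx0 (by simpa [h] using hx)
    have hNL : N ≤ L := inf_le_left
    have : IsNoetherian R L := isNoetherian_of_fg_of_noetherian L hLfg
    have hNfg : N.FG := by
      have h1 : (N.comap L.subtype).FG := IsNoetherian.noetherian _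
      have h2 : ((N.comap L.subtype).map L.subtype).FG := h1.map _
      rwa [Submodule.map_comap_subtype, inf_eq_right.mpr hNL] at h2
    have hint : IsIntegral R (β i) := by
      apply isIntegral_of_smul_mem_submodule N hN0 hNfg (β i)
      intro n hn
      refine ⟨?_, ?_⟩
      · have := hSL n hn.1
        rwa [hSeig i n hn.2] at this
      · show β i • n ∈ T.eigenspace (α i)
        exact Submodule.smul_mem _ _ hn.2
    exact IsIntegrallyClosed.isIntegral_iff.mp hint
  choose b hb using hβR
  -- differences of the b i are units
  have hbu : ∀ i j, i ≠ j → IsUnit (b i - b j) := by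
    intro i j hij
    by_contra h
    have hmem : b i - b j ∈ IsLocalRing.maximalIdeal R := h
    rw [hϖ.maximalIdeal_eq] at hmem
    obtain ⟨c, hc⟩ := Ideal.mem_span_singleton'.mp hmem
    apply hsep i j hij
    refine ⟨c, ?_⟩
    have hβij : β i - β j = algebraMap R k (c * ϖ) := by
      rw [hc, map_sub, hb, hb]
    have hαβ : ∀ m, α m = π ^ r * β m := by
      intro m
      rw [hβdef]
      rw [← mul_assoc, ← zpow_add₀ hπ0, add_neg_cancel, zpow_zero, one_mul]
    rw [hαβ i, hαβ j, ← mul_sub, hβij, map_mul, zpow_add_one₀ hπ0]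
    ring
  -- the product operators
  set g : Fin ℓ → Module.End k V := fun j => S - β j • (1 : Module.End k V) with hgdef
  have hcomm : ∀ x y : Fin ℓ, Commute (g x) (g y) := by
    intro x y
    have c1 : Commute S (β y • (1 : Module.End k V)) := (Commute.one_right S).smul_right _
    have c2 : Commute (β x • (1 : Module.End k V)) S := (Commute.one_left S).smul_left _
    have c3 : Commute (β x • (1 : Module.End k V)) (β y • (1 : Module.End k V)) :=
      ((Commute.refl (1 : Module.End k V)).smul_left _).smul_right _
    exact ((Commute.refl S).sub_right c1).sub_left (c2.sub_right c3)
  have hQeig : ∀ (s : Finset (Fin ℓ)) (m : Fin ℓ) (x : V), x ∈ T.eigenspace (α m) →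
      (s.noncommProd g (Pairwise.set_pairwise (fun a b _ => hcomm a b) _)) x = (∏ j ∈ s, (β m - β j)) • x := by
    intro s m x hx
    induction s using Finset.induction with
    | empty => simp [Finset.noncommProd_empty]
    | @insert a s hns ih =>
      rw [Finset.noncommProd_insert_of_notMem _ _ _ _ hns, Finset.prod_insert hns,
        Module.End.mul_apply, ih, LinearMap.map_smul]
      have hax : g a x = (β m - β a) • x := by
        simp only [hgdef, LinearMap.sub_apply, LinearMap.smul_apply, Module.End.one_apply,
          hSeig m x hx, sub_smul]
      rw [hax, smul_smul, mul_comm]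
  have hQL : ∀ (s : Finset (Fin ℓ)) (x : V), x ∈ L →
      (s.noncommProd g (Pairwise.set_pairwise (fun a b _ => hcomm a b) _)) x ∈ L := by
    intro s x hx
    induction s using Finset.induction with
    | empty => simpa [Finset.noncommProd_empty] using hx
    | @insert a s hns ih =>
      rw [Finset.noncommProd_insert_of_notMem _ _ _ _ hns, Module.End.mul_apply]
      have hga : ∀ y ∈ L, g a y ∈ L := by
        intro y hy
        have hgay : g a y = S y - β a • y := by
          simp [hgdef]
        rw [hgay]
        apply sub_mem (hSL _ hy)
        rw [← hb, algebraMap_smul]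
        exact L.smul_mem _ hy
      exact hga _ ih
  -- main argument
  refine le_antisymm ?_ (iSup_le fun i => inf_le_left)
  intro v hv
  have hv' : v ∈ ⨆ i, T.eigenspace (α i) := by rw [hdiag]; exact Submodule.mem_top
  rw [Submodule.mem_iSup_iff_exists_finsupp] at hv'
  obtain ⟨f, hf, hsum⟩ := hv'
  have key : ∀ i, f i ∈ L := by
    intro i
    have h1 : ((Finset.univ.erase i).noncommProd g (Pairwise.set_pairwise (fun a b _ => hcomm a b) _)) v
        = (∏ j ∈ Finset.univ.erase i, (β i - β j)) • f i := by
      rw [← hsum, Finsupp.sum, map_sum]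
      rw [Finset.sum_eq_single i]
      · exact hQeig _ i (f i) (hf i)
      · intro m _ hmi
        rw [hQeig _ m (f m) (hf m), Finset.prod_eq_zero (Finset.mem_erase.mpr ⟨hmi, Finset.mem_univ m⟩)
          (by rw [sub_self]), zero_smul]
      · intro hi
        rw [Finsupp.notMem_support_iff.mp hi, map_zero]
    have h2 : (∏ j ∈ Finset.univ.erase i, (β i - β j))
        = algebraMap R k (∏ j ∈ Finset.univ.erase i, (b i - b j)) := by
      rw [map_prod]
      exact Finset.prod_congr rfl fun j _ => by rw [map_sub, hb, hb]
    have hu : IsUnit (∏ j ∈ Finset.univ.erase i, (b i - b j)) := by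
      apply Finset.prod_induction _ IsUnit (fun _ _ => IsUnit.mul) isUnit_one
      intro j hj
      exact hbu i j (Ne.symm (Finset.mem_erase.mp hj).1)
    obtain ⟨w, hw⟩ := hu
    have h3 : (∏ j ∈ Finset.univ.erase i, (b i - b j)) • f i ∈ L := by
      have h4 := hQL (Finset.univ.erase i) v hv
      rw [h1, h2, algebraMap_smul] at h4
      exact h4
    have h5 : f i = ((w⁻¹ : Rˣ) : R) • ((∏ j ∈ Finset.univ.erase i, (b i - b j)) • f i) := by
      rw [smul_smul, ← hw, Units.inv_mul, one_smul]
    rw [h5]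
    exact L.smul_mem _ h3
  rw [← hsum]
  exact Submodule.sum_mem _ fun m _ =>
    Submodule.mem_iSup_of_mem m (Submodule.mem_inf.mpr ⟨key m, hf m⟩)
end

section
/- Let k be a field with valuation ν, and let m be a linear operator on a finite-dimensional k-vector space W (thought of as g/m) that is diagonalizable with all eigenvalues β satisfying ν(β − 1) > c, where c = max over eigenvalues α ≠ 1 of a commuting diagonalizable operator γ of max{0, ν(α − 1)}. Then the operator γm (composition) has s(γm) = s(γ), where s(x) := max over generalized eigenvalues λ of x of max{0, ν(λ − 1)}. -/
open Module.End Submodule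

/-- For a diagonalizable endomorphism, generalized eigenspaces are eigenspaces. -/
lemma aux_maxGen_eq_eigen {k W : Type*} [Field k] [AddCommGroup W] [Module k W]
    (f : Module.End k W) (h : (⨆ μ : k, f.eigenspace μ) = ⊤) (μ : k) :
    f.maxGenEigenspace μ = f.eigenspace μ := by
  refine le_antisymm (fun v hv => ?_) ((f.genEigenspace μ).mono le_top)
  have hsplit : (⊤ : Submodule k W) ≤
      f.eigenspace μ ⊔ ⨆ (μ' : k) (_ : μ' ≠ μ), f.maxGenEigenspace μ' := by
    rw [← h]
    refine iSup_le fun μ' => ?_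
    rcases eq_or_ne μ' μ with rfl | hne
    · exact le_sup_left
    · exact le_trans ((f.genEigenspace μ').mono le_top)
        (le_trans (le_iSup₂ (f := fun μ'' (_ : μ'' ≠ μ) => f.maxGenEigenspace μ'') μ' hne)
          le_sup_right)
  have hv' : v ∈ f.eigenspace μ ⊔ ⨆ (μ' : k) (_ : μ' ≠ μ), f.maxGenEigenspace μ' :=
    hsplit Submodule.mem_top
  obtain ⟨a, ha, b, hb, hab⟩ := Submodule.mem_sup.mp hv'
  have hva : v - a = b := by rw [← hab]; abel
  have h1 : v - a ∈ f.maxGenEigenspace μ :=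
    sub_mem hv (((f.genEigenspace μ).mono le_top) ha)
  have h2 : v - a ∈ ⨆ (μ' : k) (_ : μ' ≠ μ), f.maxGenEigenspace μ' := hva ▸ hb
  have h0 : v - a = 0 := by
    have := (f.independent_maxGenEigenspace μ).le_bot ⟨h1, h2⟩
    simpa using this
  have : v = a := by rwa [sub_eq_zero] at h0
  rwa [this]

/-- Key valuation computation. -/
lemma aux_val {k : Type*} [Field k] (ν : AddValuation k (WithTop ℤ)) {c : WithTop ℤ}
    {α β : k} (hc : max 0 (ν (α - 1)) ≤ c) (hβ : c < ν (β - 1)) :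
    ν (α * β - 1) = ν (α - 1) := by
  have hα1 : ν (α - 1) < ⊤ :=
    lt_of_le_of_lt (le_trans (le_max_right _ _) hc) (lt_of_lt_of_le hβ le_top)
  have hνα : min (ν (α - 1)) 0 ≤ ν α := by
    have h := ν.map_add (α - 1) 1
    simpa using h
  have hminmax : min (ν (α - 1)) 0 + max 0 (ν (α - 1)) = ν (α - 1) := by
    rcases le_total (ν (α - 1)) 0 with h | h
    · rw [min_eq_left h, max_eq_left h, add_zero]
    · rw [min_eq_right h, max_eq_right h, zero_add]
  have hmin_ne : min (ν (α - 1)) 0 ≠ ⊤ := by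
    intro h
    have := min_le_right (ν (α - 1)) (0 : WithTop ℤ)
    rw [h] at this
    simp at this
  have hlt : ν (α - 1) < ν (α * (β - 1)) := by
    rw [ν.map_mul]
    calc ν (α - 1) = min (ν (α - 1)) 0 + max 0 (ν (α - 1)) := hminmax.symm
      _ ≤ min (ν (α - 1)) 0 + c := by exact add_le_add_right hc _
      _ < min (ν (α - 1)) 0 + ν (β - 1) := WithTop.add_lt_add_left hmin_ne hβ
      _ ≤ ν α + ν (β - 1) := add_le_add_left hνα _
  have heq : α * β - 1 = (α - 1) + α * (β - 1) := by ring
  rw [heq, ν.map_add_eq_of_lt_left hlt]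

/-- If a family of subspaces with sup ⊤ lies in (max generalized) eigenspaces of `g`
indexed by `ρ`, then every eigenvalue of `g` is hit by some nonzero member. -/
lemma aux_exists {k W : Type*} [Field k] [AddCommGroup W] [Module k W]
    {ι : Type*} (P : ι → Submodule k W) (hP : (⨆ χ, P χ) = ⊤)
    (g : Module.End k W) (ρ : ι → k) (hle : ∀ χ, P χ ≤ g.maxGenEigenspace (ρ χ))
    {lam : k} (hlam : g.HasEigenvalue lam) :
    ∃ χ, P χ ≠ ⊥ ∧ ρ χ = lam := by
  by_contra hcon
  push_neg at hcon
  have h1 : (⊤ : Submodule k W) ≤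
      ⨆ (μ : k) (_ : μ ≠ lam), g.maxGenEigenspace μ := by
    rw [← hP]
    refine iSup_le fun χ => ?_
    rcases eq_or_ne (P χ) ⊥ with h | h
    · simp [h]
    · exact (hle χ).trans
        (le_iSup₂ (f := fun μ (_ : μ ≠ lam) => g.maxGenEigenspace μ) (ρ χ) (hcon χ h))
  have h3 : g.maxGenEigenspace lam = ⊥ := by
    rw [eq_bot_iff]
    intro v hv
    exact (g.independent_maxGenEigenspace lam).le_bot ⟨hv, h1 Submodule.mem_top⟩
  exact hlam (le_bot_iff.mp (le_trans ((g.genEigenspace lam).mono le_top) h3.le))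

/-- Singular depth of a product: if γ and m are commuting diagonalizable
operators, c = s(γ) = max over eigenvalues α of γ of max{0, ν(α−1)}, and every
eigenvalue β of m satisfies ν(β − 1) > c, then s(γm) = c = s(γ); i.e. c is an
upper bound for, and is attained by, max{0, ν(λ−1)} over eigenvalues λ of γm. -/
theorem singular_depth_product
    (k : Type*) [Field k] (ν : AddValuation k (WithTop ℤ))
    (W : Type*) [AddCommGroup W] [Module k W] [FiniteDimensional k W]
    (γ m : Module.End k W) (hcomm : Commute γ m)
    (hγbij : Function.Bijective γ) (hmbij : Function.Bijective m)
    (hγdiag : (⨆ α : k, γ.eigenspace α) = ⊤)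
    (hmdiag : (⨆ β : k, m.eigenspace β) = ⊤)
    (c : WithTop ℤ)
    (hub : ∀ α : k, γ.HasEigenvalue α → max 0 (ν (α - 1)) ≤ c)
    (hatt : ∃ α : k, γ.HasEigenvalue α ∧ max 0 (ν (α - 1)) = c)
    (hmev : ∀ β : k, m.HasEigenvalue β → c < ν (β - 1)) :
    (∀ lam : k, (γ * m).HasEigenvalue lam → max 0 (ν (lam - 1)) ≤ c) ∧
    (∃ lam : k, (γ * m).HasEigenvalue lam ∧ max 0 (ν (lam - 1)) = c) := by
  have hγmax := aux_maxGen_eq_eigen γ hγdiag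
  have hmmax := aux_maxGen_eq_eigen m hmdiag
  set f : Fin 2 → Module.End k W := ![γ, m] with hf
  have hf0 : f 0 = γ := rfl
  have hf1 : f 1 = m := rfl
  set P : (Fin 2 → k) → Submodule k W :=
    fun χ => ⨅ i, (f i).maxGenEigenspace (χ i) with hPdef
  -- simultaneous diagonalization
  have hsim : (⨆ χ : Fin 2 → k, P χ) = ⊤ := by
    apply Module.End.iSup_iInf_maxGenEigenspace_eq_top_of_iSup_maxGenEigenspace_eq_top_of_commute
    · intro i j hij
      fin_cases i <;> fin_cases j <;> simp_all [hf0, hf1, hcomm, hcomm.symm]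
    · intro i
      have hdi : (⨆ μ : k, (f i).eigenspace μ) = ⊤ := by
        fin_cases i
        · exact hγdiag
        · exact hmdiag
      rw [eq_top_iff, ← hdi]
      exact iSup_le fun μ => le_trans (((f i).genEigenspace μ).mono le_top) (le_iSup (fun μ => (f i).maxGenEigenspace μ) μ)
  -- each joint eigenspace lies in an eigenspace of γ*m
  have hPγ : ∀ χ : Fin 2 → k, P χ ≤ γ.eigenspace (χ 0) := fun χ =>
    le_trans (iInf_le _ 0) (hγmax (χ 0)).le
  have hPm : ∀ χ : Fin 2 → k, P χ ≤ m.eigenspace (χ 1) := fun χ =>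
    le_trans (iInf_le _ 1) (hmmax (χ 1)).le
  have key : ∀ χ : Fin 2 → k, P χ ≤ (γ * m).eigenspace (χ 0 * χ 1) := by
    intro χ v hv
    have h1 : γ v = χ 0 • v := mem_eigenspace_iff.mp (hPγ χ hv)
    have h2 : m v = χ 1 • v := mem_eigenspace_iff.mp (hPm χ hv)
    rw [mem_eigenspace_iff]
    show γ (m v) = (χ 0 * χ 1) • v
    rw [h2, map_smul, h1, smul_smul, mul_comm]
  -- γ*m is diagonalizable
  have hgm_diag : (⨆ μ : k, (γ * m).eigenspace μ) = ⊤ := by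
    rw [eq_top_iff, ← hsim]
    exact iSup_le fun χ => le_trans (key χ) (le_iSup _ (χ 0 * χ 1))
  have hgmmax := aux_maxGen_eq_eigen (γ * m) hgm_diag
  constructor
  · -- upper bound
    intro lam hlam
    obtain ⟨χ, hne, hχ⟩ := aux_exists P hsim (γ * m) (fun χ => χ 0 * χ 1)
      (fun χ => le_trans (key χ) (hgmmax _).ge) hlam
    have hα : γ.HasEigenvalue (χ 0) := fun hbot =>
      hne (le_bot_iff.mp (hbot ▸ hPγ χ))
    have hβ : m.HasEigenvalue (χ 1) := fun hbot =>
      hne (le_bot_iff.mp (hbot ▸ hPm χ))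
    rw [← hχ, aux_val ν (hub _ hα) (hmev _ hβ)]
    exact hub _ hα
  · -- attainment
    obtain ⟨α, hα, hαc⟩ := hatt
    obtain ⟨χ, hne, hχ⟩ := aux_exists P hsim γ (fun χ => χ 0)
      (fun χ => le_trans (iInf_le _ 0) (by rw [hf0])) hα
    have hβ : m.HasEigenvalue (χ 1) := fun hbot =>
      hne (le_bot_iff.mp (hbot ▸ hPm χ))
    refine ⟨χ 0 * χ 1, ?_, ?_⟩
    · exact fun hbot => hne (le_bot_iff.mp (hbot ▸ key χ))
    · rw [aux_val ν (hχ ▸ hub _ (hχ ▸ hα)) (hmev _ hβ), hχ, hαc]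
end

section
/- Let (k, ν) be a valued field, W a finite-dimensional k-vector space with a decreasing filtration by subgroups W_r (r ∈ ℝ) satisfying W_r ⊇ W_s for r ≤ s and α·W_r ⊆ W_{r+ν(α)} for α ∈ k^×. Let γ be an automorphism of W preserving each W_r, diagonalizable with eigenvalues α_i ≠ 1 satisfying ν(α_i − 1) ≤ c, and suppose the eigenspace decomposition is compatible with the filtration: W_r = ⊕_i (W_r ∩ W^{α_i}) where W^{α_i} is the α_i-eigenspace. If Z ∈ W lies in W_{−t} but not in ∪_{s > −t} W_s, then γZ − Z ∉ ∪_{s > −t + c} W_s. -/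
/-- Abstraction of Lemma `Z-gamma`: let W carry a decreasing filtration by
additive subgroups compatible with the valuation and with the eigenspace
decomposition of a diagonalizable automorphism γ whose eigenvalues α_i ≠ 1
satisfy 0 ≤ ν(α_i − 1) ≤ c. If Z lies in W₋ₜ but in no deeper W_s (s > −t),
then γZ − Z lies in no W_s with s > −t + c. -/
theorem Z_gamma_filtration
    (k : Type*) [Field k] (ν : AddValuation k (WithTop ℤ))
    (W : Type*) [AddCommGroup W] [Module k W] [FiniteDimensional k W]
    (Wf : ℝ → AddSubgroup W)
    (hdec : ∀ r s : ℝ, r ≤ s → Wf s ≤ Wf r)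
    (hscal : ∀ (a : k) (n : ℤ), ν a = (n : WithTop ℤ) →
      ∀ (r : ℝ), ∀ x ∈ Wf r, a • x ∈ Wf (r + n))
    (γ : Module.End k W) (hγbij : Function.Bijective γ)
    (hpres : ∀ (r : ℝ), ∀ x ∈ Wf r, γ x ∈ Wf r)
    (ι : Type*) [Fintype ι] (α : ι → k)
    (hα1 : ∀ i, α i ≠ 1)
    (c : ℤ)
    (hα0 : ∀ i, (0 : WithTop ℤ) ≤ ν (α i - 1))
    (hαc : ∀ i, ν (α i - 1) ≤ (c : WithTop ℤ))
    (hdiag : (⨆ i, γ.eigenspace (α i)) = ⊤)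
    (hcompat : ∀ (r : ℝ), ∀ x ∈ Wf r, ∃ f : ι → W,
      (∀ i, f i ∈ Wf r ∧ f i ∈ γ.eigenspace (α i)) ∧ x = ∑ i, f i)
    (t : ℝ) (Z : W)
    (hZ : Z ∈ Wf (-t)) (hZdeep : ∀ s : ℝ, -t < s → Z ∉ Wf s) :
    ∀ s : ℝ, -t + c < s → γ Z - Z ∉ Wf s := by
  -- eigenspace 1 is ⊥
  have heig1 : γ.eigenspace (1 : k) = ⊥ := by
    have hind := γ.eigenspaces_iSupIndep
    have h1 := (iSupIndep_def.mp hind) (1 : k)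
    have hle : (⊤ : Submodule k W) ≤ ⨆ (j : k) (_ : j ≠ (1:k)), γ.eigenspace j := by
      rw [← hdiag]
      exact iSup_le fun i => le_iSup_of_le (α i) (le_iSup_of_le (hα1 i) le_rfl)
    exact disjoint_top.mp (h1.mono_right hle)
  intro s hs hmem
  -- decompose γ Z - Z
  obtain ⟨g, hg, hsum⟩ := hcompat s _ hmem
  -- valuations
  have hν : ∀ i, ∃ m : ℤ, ν (α i - 1) = (m : WithTop ℤ) ∧ m ≤ c := by
    intro i
    rcases eq_or_ne (ν (α i - 1)) ⊤ with h | h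
    · exact absurd (h ▸ hαc i) (by simp)
    · obtain ⟨m, hm⟩ := WithTop.ne_top_iff_exists.mp h
      exact ⟨m, hm.symm, by exact_mod_cast hm ▸ hαc i⟩
  choose m hm hmc using hν
  -- X := ∑ (α i - 1)⁻¹ • g i
  set X : W := ∑ i, (α i - 1)⁻¹ • g i with hX
  have hαi0 : ∀ i, α i - 1 ≠ 0 := fun i => sub_ne_zero.mpr (hα1 i)
  have hXmem : X ∈ Wf (s - c) := by
    apply AddSubgroup.sum_mem
    intro i _
    have hinv : ν (α i - 1)⁻¹ = ((-(m i) : ℤ) : WithTop ℤ) := by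
      have h0 : ν ((α i - 1) * (α i - 1)⁻¹) = 0 := by
        rw [mul_inv_cancel₀ (hαi0 i)]; exact ν.map_one
      rw [ν.map_mul, hm i] at h0
      push_cast
      rcases eq_or_ne (ν (α i - 1)⁻¹) ⊤ with h | h
      · rw [h] at h0; simp at h0
      · obtain ⟨p, hp⟩ := WithTop.ne_top_iff_exists.mp h
        rw [← hp] at h0 ⊢
        rw [← WithTop.coe_add] at h0
        norm_cast at h0 ⊢
        omega
    have := hscal _ _ hinv s _ (hg i).1
    refine hdec _ _ ?_ this
    push_cast
    have : (m i : ℝ) ≤ (c : ℝ) := by exact_mod_cast hmc i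
    linarith
  -- γ X - X = γ Z - Z
  have hdiff : γ X - X = γ Z - Z := by
    rw [hsum, hX, map_sum, ← Finset.sum_sub_distrib]
    apply Finset.sum_congr rfl
    intro i _
    have hei : γ (g i) = α i • g i := Module.End.mem_eigenspace_iff.mp (hg i).2
    rw [map_smul, hei, smul_smul, ← sub_smul]
    have : (α i - 1)⁻¹ * α i - (α i - 1)⁻¹ = 1 := by
      field_simp
      exact div_self (hαi0 i)
    rw [this, one_smul]
  have hXZ : X = Z := by
    have : X - Z ∈ γ.eigenspace (1 : k) := by
      rw [Module.End.mem_eigenspace_iff, one_smul, map_sub]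
      exact sub_eq_sub_iff_sub_eq_sub.mpr hdiff
    rw [heig1] at this
    simpa [sub_eq_zero] using this
  have hsc : -t < s - c := by linarith
  exact hZdeep (s - c) hsc (hXZ ▸ hXmem)
end

section
/- Let V be a complex inner product space with an orthogonal projection E onto a finite-dimensional subspace V_d, and let π be a unitary-on-V_d representation of a group G on V. Suppose that the function Θ(g) = tr(E π(g) E) satisfies Θ(k₁ x k₂) expressed both as ∑_j ⟨π(k₁) E π(x k₂) v_j, v_j⟩ and (by conjugation invariance Θ(k₁xk₂) = Θ(k₂k₁x)) as ∑_j ⟨π(k₂) E π(k₁ x) v_j, v_j⟩ for an orthonormal basis {v_j} of V_d and k₁, k₂ in a subgroup K under which E is equivariant. If Θ(x) ≠ 0, then the map k ↦ E π(k) acting on V_d defines a nonzero intertwiner between the K ∩ xKx⁻¹-representations d and ˣd, i.e., Hom_{K ∩ xKx⁻¹}(d, ˣd) ≠ 0, where d is the representation of K on V_d and ˣd(xkx⁻¹) := d(k). -/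
/-- Proposition `intertwine`: if the partial trace Θ_d(x) = tr(E π(x) E) is
nonzero, where E is the K-equivariant orthogonal projection onto the
finite-dimensional subspace V_d on which π|_K is unitary, then there is a
nonzero intertwiner in Hom_{K ∩ xKx⁻¹}(d, ˣd), where ˣd(g) = d(x⁻¹gx). -/
theorem partial_trace_nonzero_intertwines
    (G : Type*) [Group G] (K : Subgroup G)
    (V : Type*) [NormedAddCommGroup V] [InnerProductSpace ℂ V]
    (π : Representation ℂ G V)
    (Vd : Submodule ℂ V) [FiniteDimensional ℂ Vd]
    (E : V →ₗ[ℂ] V)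
    (hE2 : E ∘ₗ E = E)
    (hErange : ∀ v : V, E v ∈ Vd)
    (hEfix : ∀ v ∈ Vd, E v = v)
    (hEsa : ∀ v w : V, (inner ℂ (E v) w : ℂ) = inner ℂ v (E w))
    (hEK : ∀ g ∈ K, E ∘ₗ π g = π g ∘ₗ E)
    (hunit : ∀ g ∈ K, ∀ v ∈ Vd, ∀ w ∈ Vd,
      (inner ℂ (π g v) (π g w) : ℂ) = inner ℂ v w)
    (x : G)
    (hres : ∀ v ∈ Vd, (E ∘ₗ π x ∘ₗ E) v ∈ Vd)
    (hΘ : LinearMap.trace ℂ Vd ((E ∘ₗ π x ∘ₗ E).restrict hres) ≠ 0) :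
    ∃ φ : V →ₗ[ℂ] V, (∀ v : V, φ v ∈ Vd) ∧ (∃ v ∈ Vd, φ v ≠ 0) ∧
      ∀ g : G, g ∈ K → x⁻¹ * g * x ∈ K →
        ∀ v ∈ Vd, φ (π g v) = π (x⁻¹ * g * x) (φ v) := by
  classical
  -- basic multiplicativity facts for π
  have hπmul : ∀ (a b : G) (u : V), π a (π b u) = π (a * b) u := by
    intro a b u; rw [map_mul]; rfl
  have hπinv : ∀ (a : G) (u : V), π a (π a⁻¹ u) = u := by
    intro a u; rw [hπmul, mul_inv_cancel, map_one]; rfl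
  -- Vd is K-invariant
  have hVdK : ∀ g ∈ K, ∀ v ∈ Vd, π g v ∈ Vd := by
    intro g hg v hv
    have h1 : (E ∘ₗ π g) v = (π g ∘ₗ E) v := by rw [hEK g hg]
    simp only [LinearMap.comp_apply] at h1
    rw [hEfix v hv] at h1
    rw [← h1]
    exact hErange _
  -- unitarity in "move to other side" form
  have hunit' : ∀ g ∈ K, ∀ u ∈ Vd, ∀ w ∈ Vd,
      (inner ℂ (π g u) w : ℂ) = inner ℂ u (π g⁻¹ w) := by
    intro g hg u hu w hw
    have h1 : π g⁻¹ w ∈ Vd := hVdK g⁻¹ (inv_mem hg) w hw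
    calc (inner ℂ (π g u) w : ℂ) = inner ℂ (π g u) (π g (π g⁻¹ w)) := by rw [hπinv]
      _ = inner ℂ u (π g⁻¹ w) := hunit g hg u hu _ h1
  have hEKapp : ∀ g ∈ K, ∀ u : V, E (π g u) = π g (E u) := by
    intro g hg u
    have := congrArg (fun f : V →ₗ[ℂ] V => f u) (hEK g hg)
    simpa using this
  set A : Vd →ₗ[ℂ] Vd := (E ∘ₗ π x ∘ₗ E).restrict hres with hAdef
  have hA0 : A ≠ 0 := by
    intro h
    apply hΘ
    rw [h, map_zero]
  set B : Vd →ₗ[ℂ] Vd := LinearMap.adjoint A with hBdef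
  have hB0 : B ≠ 0 := by
    intro h
    apply hA0
    rw [← LinearMap.adjoint_adjoint A, ← hBdef, h, LinearMap.adjoint.map_zero]
  obtain ⟨u, hu⟩ : ∃ u : Vd, B u ≠ 0 := by
    by_contra h
    push_neg at h
    exact hB0 (LinearMap.ext fun u => h u)
  set P : V →ₗ[ℂ] Vd := LinearMap.codRestrict Vd E hErange with hPdef
  have hPapp : ∀ (v : V) (hv : v ∈ Vd), P v = ⟨v, hv⟩ := by
    intro v hv
    apply Subtype.ext
    show E v = v
    exact hEfix v hv
  refine ⟨Vd.subtype ∘ₗ B ∘ₗ P, ?_, ?_, ?_⟩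
  · intro v
    exact (B (P v)).2
  · refine ⟨(u : V), u.2, ?_⟩
    simp only [LinearMap.comp_apply, Submodule.subtype_apply]
    rw [hPapp (u : V) u.2]
    intro h
    apply hu
    exact Subtype.ext (by simpa using h)
  · intro g hg hg' v hv
    set h : G := x⁻¹ * g * x with hhdef
    have hπgv : π g v ∈ Vd := hVdK g hg v hv
    -- key adjoint computation
    have hBinner : ∀ (p : Vd) (w : Vd),
        (inner ℂ ((B p : V)) ((w : V)) : ℂ) = inner ℂ (p : V) (E (π x (w : V))) := by
      intro p w
      have h1 : (inner ℂ (B p) w : ℂ) = inner ℂ p (A w) := LinearMap.adjoint_inner_left A w p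
      rw [Submodule.coe_inner, Submodule.coe_inner] at h1
      rw [h1]
      congr 1
      show ((A w : V)) = E (π x (w : V))
      rw [hAdef]
      rw [LinearMap.restrict_coe_apply]
      simp only [LinearMap.comp_apply]
      rw [hEfix (w : V) w.2]
    simp only [LinearMap.comp_apply, Submodule.subtype_apply]
    rw [hPapp (π g v) hπgv, hPapp v hv]
    set L : V := (B ⟨π g v, hπgv⟩ : V) with hLdef
    set R : V := π h (B ⟨v, hv⟩ : V) with hRdef
    have hLmem : L ∈ Vd := (B ⟨π g v, hπgv⟩).2
    have hRmem : R ∈ Vd := hVdK h hg' _ (B ⟨v, hv⟩).2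
    have key : ∀ w ∈ Vd, (inner ℂ L w : ℂ) = inner ℂ R w := by
      intro w hw
      have hLcalc : (inner ℂ L w : ℂ) = inner ℂ v (E (π (g⁻¹ * x) w)) := by
        rw [hLdef,
          show (inner ℂ ((B ⟨π g v, hπgv⟩ : Vd) : V) w : ℂ) = inner ℂ (π g v) (E (π x w)) from
            hBinner ⟨π g v, hπgv⟩ ⟨w, hw⟩,
          hunit' g hg v hv _ (hErange _)]
        congr 1
        rw [← hEKapp g⁻¹ (inv_mem hg) _, hπmul]
      have hwh : π h⁻¹ w ∈ Vd := hVdK h⁻¹ (inv_mem hg') w hw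
      have hRcalc : (inner ℂ R w : ℂ) = inner ℂ v (E (π (g⁻¹ * x) w)) := by
        rw [hRdef, hunit' h hg' _ (B ⟨v, hv⟩).2 w hw,
          show (inner ℂ ((B ⟨v, hv⟩ : Vd) : V) (π h⁻¹ w) : ℂ)
              = inner ℂ (v : V) (E (π x (π h⁻¹ w))) from hBinner ⟨v, hv⟩ ⟨π h⁻¹ w, hwh⟩]
        congr 2
        rw [hπmul]
        congr 1
        rw [hhdef]
        group
      rw [hLcalc, hRcalc]
    have hsub : L - R ∈ Vd := Vd.sub_mem hLmem hRmem
    have hz : (inner ℂ (L - R) (L - R) : ℂ) = 0 := by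
      rw [inner_sub_left, key _ hsub, sub_self]
    have hz2 : L - R = 0 := inner_self_eq_zero.mp hz
    exact sub_eq_zero.mp hz2
end
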